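/- Let {A_1,...,A_m} be a bimodal collection of disjoint subsets of an abelian group G with internal difference groups H_i, where |A_1| < |H_1| and |A_i| = |H_i| for all 2 ≤ i ≤ m (so each A_i, i ≥ 2, is a full coset of H_i). Then for every i with 2 ≤ i ≤ m, H_i is a subgroup of H_1. -/

import Mathlib

variable {G : Type*} [AddCommGroup G] [Fintype G]

/-- `N A i δ` counts the pairs `(a, b)` with `a ∈ A i`, `b ∈ A j` for some `j ≠ i`,
and `a - b = δ`. -/
noncomputable def bimodalCount {ι : Type*} (A : ι → Set G) (i : ι) (δ : G) : ℕ :=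
  {p : G × G | p.1 ∈ A i ∧ (∃ j, j ≠ i ∧ p.2 ∈ A j) ∧ p.1 - p.2 = δ}.ncard

/-- A collection of subsets has the bimodal property if every nonzero `δ` occurs as
an external difference out of `A i` either `0` or `|A i|` times. -/
def IsBimodal {ι : Type*} (A : ι → Set G) : Prop :=
  ∀ δ : G, δ ≠ 0 → ∀ i : ι,
    bimodalCount A i δ = 0 ∨ bimodalCount A i δ = (A i).ncard

/-- The internal difference group of a subset `X`: the subgroup generated by all
differences of elements of `X`. -/
def idg (X : Set G) : AddSubgroup G :=
  AddSubgroup.closure {d : G | ∃ x ∈ X, ∃ y ∈ X, x - y = d}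

private lemma lemA {ι : Type*} (A : ι → Set G)
    (hdisj : ∀ i j, i ≠ j → Disjoint (A i) (A j)) (hbim : IsBimodal A)
    (k : ι) {x y b : G} (hx : x ∈ A k) (hy : y ∈ A k)
    (hb : ∃ j, j ≠ k ∧ b ∈ A j) : ∃ j, j ≠ k ∧ b + (x - y) ∈ A j := by
  rcases eq_or_ne x y with rfl | hxy
  · simpa using hb
  obtain ⟨j, hjk, hbj⟩ := hb
  have hyb : y ≠ b := (hdisj k j (Ne.symm hjk)).ne_of_mem hy hbj
  set δ := y - b with hδdef
  have hδ : δ ≠ 0 := sub_ne_zero.mpr hyb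
  have hcnt := hbim δ hδ k
  set E : Set (G × G) :=
    {p : G × G | p.1 ∈ A k ∧ (∃ j, j ≠ k ∧ p.2 ∈ A j) ∧ p.1 - p.2 = δ} with hE
  have hEfin : E.Finite := Set.toFinite _
  have hEne : E.Nonempty := ⟨(y, b), hy, ⟨j, hjk, hbj⟩, rfl⟩
  have hcount : bimodalCount A k δ = E.ncard := rfl
  have hne0 : bimodalCount A k δ ≠ 0 := by
    rw [hcount]
    exact fun h0 => hEne.ne_empty ((Set.ncard_eq_zero hEfin).mp h0)
  have hcard : E.ncard = (A k).ncard := by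
    rcases hcnt with h | h
    · exact absurd h hne0
    · rw [← hcount, h]
  have hinj : Set.InjOn Prod.fst E := by
    intro p hp q hq hpq
    have hp2 : p.2 = p.1 - δ := by rw [← hp.2.2]; abel
    have hq2 : q.2 = q.1 - δ := by rw [← hq.2.2]; abel
    exact Prod.ext hpq (by rw [hp2, hq2, hpq])
  have himg : Prod.fst '' E = A k := by
    apply Set.eq_of_subset_of_ncard_le
    · rintro _ ⟨p, hp, rfl⟩; exact hp.1
    · rw [Set.ncard_image_of_injOn hinj, hcard]
    · exact Set.toFinite _
  have hx' : x ∈ Prod.fst '' E := himg ▸ hx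
  obtain ⟨p, hp, hpx⟩ := hx'
  have hp2 : p.2 = b + (x - y) := by
    have h1 := hp.2.2
    rw [hpx] at h1
    rw [show b + (x - y) = x - (y - b) by abel, hδdef] at *
    rw [← h1]; abel
  obtain ⟨j', hj', hmem⟩ := hp.2.1
  exact ⟨j', hj', by rwa [hp2] at hmem⟩

private def stabAdd (B : Set G) : AddSubgroup G where
  carrier := {h : G | (fun b => b + h) '' B = B}
  zero_mem' := by simp
  add_mem' := by
    intro h h' hh hh'
    simp only [Set.mem_setOf_eq] at hh hh' ⊢
    have hc : (fun b : G => b + (h + h')) = (fun b => b + h') ∘ (fun b => b + h) := by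
      funext b; simp [add_assoc]
    rw [hc, Set.image_comp, hh, hh']
  neg_mem' := by
    intro h hh
    simp only [Set.mem_setOf_eq] at hh ⊢
    conv_lhs => rw [← hh, ← Set.image_comp]
    simp

private lemma idg_le_stab {ι : Type*} (A : ι → Set G)
    (hdisj : ∀ i j, i ≠ j → Disjoint (A i) (A j)) (hbim : IsBimodal A) (k : ι) :
    idg (A k) ≤ stabAdd {b : G | ∃ j, j ≠ k ∧ b ∈ A j} := by
  rw [idg, AddSubgroup.closure_le]
  rintro d ⟨x, hx, y, hy, rfl⟩
  show (fun b => b + (x - y)) '' _ = _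
  apply Set.eq_of_subset_of_ncard_le
  · rintro _ ⟨b, hb, rfl⟩
    exact lemA A hdisj hbim k hx hy hb
  · rw [Set.ncard_image_of_injective _ (add_left_injective _)]
  · exact Set.toFinite _

/-- If `A 0` is the unique set not filling a coset of its internal
difference group and all the others are full cosets, then `H i ≤ H 0` for `i ≠ 0`. -/
theorem bimodal_r_one_idg_le {m : ℕ} (hm : 1 ≤ m) (A : Fin (m + 1) → Set G)
    (hne : ∀ i, (A i).Nonempty)
    (hdisj : ∀ i j, i ≠ j → Disjoint (A i) (A j))
    (hbim : IsBimodal A)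
    (h0 : (A 0).ncard < Nat.card (idg (A 0)))
    (hfull : ∀ i : Fin (m + 1), i ≠ 0 → (A i).ncard = Nat.card (idg (A i))) :
    ∀ i : Fin (m + 1), i ≠ 0 → idg (A i) ≤ idg (A 0) := by
  intro i hi
  rw [SetLike.le_def]
  intro h hh
  by_contra hst
  obtain ⟨c, hc⟩ := hne i
  obtain ⟨a, ha⟩ := hne 0
  -- A i is a full coset of idg (A i)
  have hsub_i : A i ⊆ (fun g => c + g) '' (idg (A i) : Set G) := fun x hx =>
    ⟨x - c, AddSubgroup.subset_closure ⟨x, hx, c, hc, rfl⟩, by simp⟩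
  have hcardcoe : ∀ H : AddSubgroup G, (H : Set G).ncard = Nat.card H := by
    intro H
    rw [← Nat.card_coe_set_eq]
    rfl
  have hcard_i : ((fun g => c + g) '' (idg (A i) : Set G)).ncard = (A i).ncard := by
    rw [Set.ncard_image_of_injective _ (add_right_injective c), hcardcoe, hfull i hi]
  have hcoset_i : A i = (fun g => c + g) '' (idg (A i) : Set G) :=
    Set.eq_of_subset_of_ncard_le hsub_i (le_of_eq hcard_i) (Set.toFinite _)
  -- A i is stabilized by h
  have hAi : (fun b => b + h) '' A i = A i := by
    apply Set.eq_of_subset_of_ncard_le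
    · rintro _ ⟨x, hx, rfl⟩
      rw [hcoset_i] at hx ⊢
      obtain ⟨g, hg, rfl⟩ := hx
      exact ⟨g + h, add_mem hg hh, by simp only [add_comm, add_left_comm, add_assoc]⟩
    · rw [Set.ncard_image_of_injective _ (add_left_injective _)]
    · exact Set.toFinite _
  -- B i is stabilized by h
  have hBi : (fun b => b + h) '' {b : G | ∃ j, j ≠ i ∧ b ∈ A j}
      = {b : G | ∃ j, j ≠ i ∧ b ∈ A j} := idg_le_stab A hdisj hbim i hh
  -- so S = ⋃ A j is stabilized by h
  set S : Set G := {b : G | ∃ j, b ∈ A j} with hSdef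
  have hSi : S = A i ∪ {b : G | ∃ j, j ≠ i ∧ b ∈ A j} := by
    ext b
    constructor
    · rintro ⟨j, hj⟩
      rcases eq_or_ne j i with rfl | hji
      · exact Or.inl hj
      · exact Or.inr ⟨j, hji, hj⟩
    · rintro (hb | ⟨j, _, hj⟩)
      exacts [⟨i, hb⟩, ⟨j, hj⟩]
  have hS : (fun b => b + h) '' S = S := by
    rw [hSi, Set.image_union, hAi, hBi]
  have memS_iff : ∀ x : G, x ∈ S ↔ x + h ∈ S := by
    intro x
    constructor
    · intro hx; rw [← hS]; exact ⟨x, hx, rfl⟩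
    · intro hx
      rw [← hS] at hx
      obtain ⟨y, hy, hyx⟩ := hx
      have : y = x := add_left_injective h hyx
      rwa [← this]
  -- B 0 and its stability
  have hB0 : ∀ g ∈ idg (A 0), (fun b => b + g) '' {b : G | ∃ j, j ≠ (0 : Fin (m + 1)) ∧ b ∈ A j}
      = {b : G | ∃ j, j ≠ (0 : Fin (m + 1)) ∧ b ∈ A j} :=
    fun g hg => idg_le_stab A hdisj hbim 0 hg
  have hahS : a + h ∈ S := (memS_iff a).1 ⟨0, ha⟩
  have hah0 : a + h ∉ A 0 := by
    intro hmem
    apply hst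
    have hd : (a + h) - a ∈ idg (A 0) := AddSubgroup.subset_closure ⟨_, hmem, _, ha, rfl⟩
    simpa using hd
  have hahB : a + h ∈ {b : G | ∃ j, j ≠ (0 : Fin (m + 1)) ∧ b ∈ A j} := by
    obtain ⟨j, hj⟩ := hahS
    exact ⟨j, fun hj0 => hah0 (hj0 ▸ hj), hj⟩
  -- find w in the coset a + idg (A 0) not in A 0
  have hsub0 : A 0 ⊆ (fun g => a + g) '' (idg (A 0) : Set G) := fun x hx =>
    ⟨x - a, AddSubgroup.subset_closure ⟨x, hx, a, ha, rfl⟩, by simp⟩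
  have hlt : (A 0).ncard < ((fun g => a + g) '' (idg (A 0) : Set G)).ncard := by
    rw [Set.ncard_image_of_injective _ (add_right_injective a), hcardcoe]
    exact h0
  have hss : A 0 ⊂ (fun g => a + g) '' (idg (A 0) : Set G) := by
    exact hsub0.ssubset_of_ne fun heq => hlt.ne (congrArg Set.ncard heq)
  obtain ⟨w, hw, hwA⟩ := Set.exists_of_ssubset hss
  obtain ⟨g0, hg0, rfl⟩ := hw
  -- push things into B 0
  have hwh : a + g0 + h ∈ {b : G | ∃ j, j ≠ (0 : Fin (m + 1)) ∧ b ∈ A j} := by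
    rw [← hB0 g0 hg0]
    exact ⟨a + h, hahB, by abel⟩
  have hwS : a + g0 ∈ S := by
    rw [memS_iff]
    obtain ⟨j, _, hj⟩ := hwh
    exact ⟨j, hj⟩
  have hwB : a + g0 ∈ {b : G | ∃ j, j ≠ (0 : Fin (m + 1)) ∧ b ∈ A j} := by
    obtain ⟨j, hj⟩ := hwS
    exact ⟨j, fun h0' => hwA (h0' ▸ hj), hj⟩
  have haB : a ∈ {b : G | ∃ j, j ≠ (0 : Fin (m + 1)) ∧ b ∈ A j} := by
    rw [← hB0 (-g0) (neg_mem hg0)]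
    exact ⟨a + g0, hwB, by simp⟩
  obtain ⟨j, hj0, hja⟩ := haB
  exact (hdisj 0 j (Ne.symm hj0)).ne_of_mem ha hja rfl
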